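/- Under the mixture model, for any two observation indices l ≠ n (1 ≤ l, n ≤ L), the expected normalized correlation of the observations satisfies E[(1/D) Σ_{k=1}^D a_l(k) a_n(k)] = Σ_{j=1}^J p_j(l) p_j(n). -/

import Mathlib

open MeasureTheory ProbabilityTheory

/-- Under the mixture model, for any two observation indices `l ≠ n`,
the expected normalized correlation of the observations satisfies
`E[(1/D) ∑ₖ a_l(k) a_n(k)] = ∑ⱼ p_j(l) p_j(n)`. -/
theorem expected_correlation_offdiag
    {Ω : Type*} [MeasurableSpace Ω] (μ : Measure Ω) [IsProbabilityMeasure μ]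
    (J L D : ℕ) (hJ : 0 < J) (hL : 0 < L) (hD : 0 < D)
    -- hidden sources
    (h : Fin J → Fin D → Ω → ℝ)
    (hmeas : ∀ j k, Measurable (h j k))
    -- all moments of the sources are finite
    (hmom : ∀ j k (n : ℕ), Integrable (fun ω => |h j k ω| ^ n) μ)
    -- second-moment structure: E[h_i(k) h_j(k')] = δ_{ij} δ_{kk'}
    (hcorr : ∀ (i j : Fin J) (k k' : Fin D),
      ∫ ω, h i k ω * h j k' ω ∂μ = if i = j ∧ k = k' then 1 else 0)
    -- indicators
    (I : Fin J → Fin L → Fin D → Ω → ℝ)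
    (hImeas : ∀ j l k, Measurable (I j l k))
    (hI01 : ∀ j l k ω, I j l k ω = 0 ∨ I j l k ω = 1)
    (hIsum : ∀ l k ω, ∑ j, I j l k ω = 1)
    -- probabilities
    (p : Fin J → Fin L → ℝ)
    (hp0 : ∀ j l, 0 ≤ p j l) (hp1 : ∀ l, ∑ j, p j l = 1)
    (hEI : ∀ j l k, ∫ ω, I j l k ω ∂μ = p j l)
    -- the indicator families associated with distinct pairs (l,k) are mutually independent
    (hIndepI : iIndepFun
      (fun (lk : Fin L × Fin D) ω => fun j => I j lk.1 lk.2 ω) μ)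
    -- the collection of all indicators is independent of the collection of all sources
    (hIndepIh : IndepFun
      (fun ω => fun jlk : Fin J × Fin L × Fin D => I jlk.1 jlk.2.1 jlk.2.2 ω)
      (fun ω => fun jk : Fin J × Fin D => h jk.1 jk.2 ω) μ)
    -- observations
    (a : Fin L → Fin D → Ω → ℝ)
    (ha : ∀ l k ω, a l k ω = ∑ j, I j l k ω * h j k ω) :
    ∀ l n : Fin L, l ≠ n →
      ∫ ω, (1 / (D : ℝ)) * ∑ k, a l k ω * a n k ω ∂μ = ∑ j, p j l * p j n := by
  intro l n hln
  -- integrability of indicators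
  have hIint : ∀ (j : Fin J) (l' : Fin L) (k : Fin D), Integrable (I j l' k) μ := by
    intro j l' k
    refine Integrable.mono' (integrable_const 1) (hImeas j l' k).aestronglyMeasurable ?_
    filter_upwards with ω
    rcases hI01 j l' k ω with hz | hz <;> simp [hz]
  -- integrability of products of two indicators
  have hIIint : ∀ (i j : Fin J) (k : Fin D),
      Integrable (fun ω => I i l k ω * I j n k ω) μ := by
    intro i j k
    refine Integrable.mono' (integrable_const 1)
      (((hImeas i l k).mul (hImeas j n k)).aestronglyMeasurable) ?_
    filter_upwards with ω
    rcases hI01 i l k ω with hz | hz <;> rcases hI01 j n k ω with gz | gz <;>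
      simp [hz, gz]
  -- integrability of products of two sources
  have hhint : ∀ (i j : Fin J) (k : Fin D),
      Integrable (fun ω => h i k ω * h j k ω) μ := by
    intro i j k
    refine Integrable.mono' ((hmom i k 2).add (hmom j k 2))
      (((hmeas i k).mul (hmeas j k)).aestronglyMeasurable) ?_
    filter_upwards with ω
    have h1 : |h i k ω * h j k ω| ≤ |h i k ω| ^ 2 + |h j k ω| ^ 2 := by
      rw [abs_mul]
      nlinarith [abs_nonneg (h i k ω), abs_nonneg (h j k ω),
        sq_nonneg (|h i k ω| - |h j k ω|)]
    simpa [Real.norm_eq_abs, abs_mul, sq_abs] using h1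
  -- integrability of the full term
  have hterm : ∀ (i j : Fin J) (k : Fin D),
      Integrable (fun ω => (I i l k ω * I j n k ω) * (h i k ω * h j k ω)) μ := by
    intro i j k
    refine Integrable.mono' ((hhint i j k).abs)
      ((((hImeas i l k).mul (hImeas j n k)).mul
        ((hmeas i k).mul (hmeas j k))).aestronglyMeasurable) ?_
    filter_upwards with ω
    rcases hI01 i l k ω with hz | hz <;> rcases hI01 j n k ω with gz | gz <;>
      simp [hz, gz, Real.norm_eq_abs, abs_mul, le_abs_self,
        mul_nonneg, abs_nonneg]
  -- E[I_i(l,k) I_j(n,k)] = p_i(l) p_j(n)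
  have hEII : ∀ (i j : Fin J) (k : Fin D),
      ∫ ω, I i l k ω * I j n k ω ∂μ = p i l * p j n := by
    intro i j k
    have hne : ((l, k) : Fin L × Fin D) ≠ (n, k) := by
      simp [Prod.ext_iff, hln]
    have hind0 := hIndepI.indepFun hne
    have hind : IndepFun (I i l k) (I j n k) μ :=
      hind0.comp (measurable_pi_apply i) (measurable_pi_apply j)
    have hm : ∫ ω, I i l k ω * I j n k ω ∂μ
        = (∫ ω, I i l k ω ∂μ) * ∫ ω, I j n k ω ∂μ :=
      IndepFun.integral_fun_mul_eq_mul_integral hind (hIint i l k).aestronglyMeasurable (hIint j n k).aestronglyMeasurable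
    rw [hm, hEI, hEI]
  -- E[(I_i I_j)(h_i h_j)] factorizes
  have hfact : ∀ (i j : Fin J) (k : Fin D),
      ∫ ω, (I i l k ω * I j n k ω) * (h i k ω * h j k ω) ∂μ
        = (p i l * p j n) * (if i = j then 1 else 0) := by
    intro i j k
    have hφ : Measurable (fun v : (Fin J × Fin L × Fin D) → ℝ =>
        v (i, l, k) * v (j, n, k)) :=
      (measurable_pi_apply _).mul (measurable_pi_apply _)
    have hψ : Measurable (fun v : (Fin J × Fin D) → ℝ => v (i, k) * v (j, k)) :=
      (measurable_pi_apply _).mul (measurable_pi_apply _)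
    have hind : IndepFun (fun ω => I i l k ω * I j n k ω)
        (fun ω => h i k ω * h j k ω) μ := hIndepIh.comp hφ hψ
    have hm : ∫ ω, (I i l k ω * I j n k ω) * (h i k ω * h j k ω) ∂μ
        = (∫ ω, I i l k ω * I j n k ω ∂μ) * ∫ ω, h i k ω * h j k ω ∂μ :=
      IndepFun.integral_fun_mul_eq_mul_integral hind (hIIint i j k).aestronglyMeasurable (hhint i j k).aestronglyMeasurable
    rw [hm, hEII i j k, hcorr i j k k]
    simp
  -- expansion of the product of observations
  have expand : ∀ (k : Fin D) (ω : Ω), a l k ω * a n k ω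
      = ∑ i, ∑ j, (I i l k ω * I j n k ω) * (h i k ω * h j k ω) := by
    intro k ω
    rw [ha, ha, Finset.sum_mul_sum]
    refine Finset.sum_congr rfl fun i _ => Finset.sum_congr rfl fun j _ => by ring
  -- the per-coordinate expectation
  have key : ∀ k : Fin D, ∫ ω, a l k ω * a n k ω ∂μ = ∑ j, p j l * p j n := by
    intro k
    simp_rw [expand k]
    rw [integral_finset_sum _ fun i _ =>
      integrable_finset_sum _ fun j _ => hterm i j k]
    have : ∀ i : Fin J,
        ∫ ω, ∑ j, (I i l k ω * I j n k ω) * (h i k ω * h j k ω) ∂μ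
          = ∑ j, (p i l * p j n) * (if i = j then 1 else 0) := by
      intro i
      rw [integral_finset_sum _ fun j _ => hterm i j k]
      exact Finset.sum_congr rfl fun j _ => hfact i j k
    simp_rw [this]
    simp [mul_ite, Finset.sum_ite_eq]
  -- integrability of each product a_l(k) a_n(k)
  have haint : ∀ k : Fin D, Integrable (fun ω => a l k ω * a n k ω) μ := by
    intro k
    have : (fun ω => a l k ω * a n k ω)
        = fun ω => ∑ i, ∑ j, (I i l k ω * I j n k ω) * (h i k ω * h j k ω) :=
      funext fun ω => expand k ω
    rw [this]
    exact integrable_finset_sum _ fun i _ =>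
      integrable_finset_sum _ fun j _ => hterm i j k
  rw [integral_const_mul, integral_finset_sum _ fun k _ => haint k]
  simp_rw [key]
  rw [Finset.sum_const, Finset.card_univ, Fintype.card_fin, nsmul_eq_mul]
  have hD' : (D : ℝ) ≠ 0 := Nat.cast_ne_zero.mpr hD.ne'
  field_simp
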